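/- Let n and f be natural numbers with f ≥ 1 and n ≥ 3f + 1, and let ε > 0 be a real number. Let w_1,…,w_n be real numbers in [0,1], and suppose there is a set S ⊆ {1,…,n} with |S| ≥ n − f such that w_i = 1 for all i ∈ S. Let T_1,…,T_n be independent random variables, each uniformly distributed on [0,1], and set X_i = w_i·T_i. Then the probability that there exist distinct indices i ≠ j with X_j = max_{1≤k≤n} X_k and X_i ≥ X_j − 2ε is at most 8nε. -/

import Mathlib

open MeasureTheory ProbabilityTheory ENNReal

lemma near_max_aux {Ω : Type*} [MeasurableSpace Ω] (μ : Measure Ω)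
    [IsProbabilityMeasure μ] {n : ℕ}
    (ε : ℝ) (hε : 0 < ε) (hε2 : ε ≤ 1 / 2)
    (w : Fin n → ℝ) (hw : ∀ i, w i ∈ Set.Icc (0 : ℝ) 1)
    (T : Fin n → Ω → ℝ) (hTmeas : ∀ i, Measurable (T i))
    (hTindep : iIndepFun T μ)
    (hTunif : ∀ i, μ.map (T i) = volume.restrict (Set.Icc (0 : ℝ) 1))
    (i k₁ k₂ : Fin n) (h1i : k₁ ≠ i) (h2i : k₂ ≠ i) (h12 : k₁ ≠ k₂)
    (hw1 : w k₁ = 1) (hw2 : w k₂ = 1) :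
    μ {ω | (∀ k, k ≠ i → w k * T k ω ≤ w i * T i ω + 2 * ε) ∧
        (∃ k, k ≠ i ∧ w i * T i ω ≤ w k * T k ω)} ≤ ENNReal.ofReal (8 * ε) := by
  classical
  obtain ⟨hw0, hw1'⟩ := hw i
  set Sc : Finset (Fin n) := {i}ᶜ with hSc
  have hm1 : k₁ ∈ Sc := by simp [hSc, h1i]
  have hm2 : k₂ ∈ Sc := by simp [hSc, h2i]
  set Z : Ω → (Sc → ℝ) := fun ω k => T k ω with hZ
  have hZmeas : Measurable Z := measurable_pi_lambda _ fun k => hTmeas k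
  have hindep : IndepFun (T i) Z μ := by
    have h := hTindep.indepFun_finset {i} Sc (by simp [hSc]) hTmeas
    exact h.comp (φ := fun p : ({i} : Finset (Fin n)) → ℝ => p ⟨i, Finset.mem_singleton_self i⟩)
      (ψ := id) (measurable_pi_apply _) measurable_id
  set Sp : Set (ℝ × (Sc → ℝ)) :=
    {p | (∀ k : Sc, w k * p.2 k ≤ w i * p.1 + 2 * ε) ∧ ∃ k : Sc, w i * p.1 ≤ w k * p.2 k}
    with hSpdef
  have hmem : ∀ k' : Sc, (k' : Fin n) ≠ i := fun k' => by
    have h := k'.2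
    simp only [hSc, Finset.mem_compl, Finset.mem_singleton] at h
    exact h
  have hSp : MeasurableSet Sp := by
    have h1 : MeasurableSet {p : ℝ × (Sc → ℝ) | ∀ k : Sc, w k * p.2 k ≤ w i * p.1 + 2 * ε} := by
      rw [Set.setOf_forall]
      exact MeasurableSet.iInter fun k => measurableSet_le (by fun_prop) (by fun_prop)
    have h2 : MeasurableSet {p : ℝ × (Sc → ℝ) | ∃ k : Sc, w i * p.1 ≤ w k * p.2 k} := by
      rw [Set.setOf_exists]
      exact MeasurableSet.iUnion fun k => measurableSet_le (by fun_prop) (by fun_prop)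
    exact h1.inter h2
  have hev : {ω | (∀ k, k ≠ i → w k * T k ω ≤ w i * T i ω + 2 * ε) ∧
        (∃ k, k ≠ i ∧ w i * T i ω ≤ w k * T k ω)}
      = (fun ω => (T i ω, Z ω)) ⁻¹' Sp := by
    ext ω
    simp only [Set.mem_setOf_eq, Set.mem_preimage, hSpdef, hZ]
    constructor
    · rintro ⟨h1, k, hk, h2⟩
      exact ⟨fun k' => h1 k' (hmem k'), ⟨⟨k, by simp [hSc, hk]⟩, h2⟩⟩
    · rintro ⟨h1, ⟨k, hk⟩, h2⟩
      exact ⟨fun k' hk' => h1 ⟨k', by simp [hSc, hk']⟩, k, hmem ⟨k, hk⟩, h2⟩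
  haveI : IsProbabilityMeasure (μ.map Z) := Measure.isProbabilityMeasure_map hZmeas.aemeasurable
  have hmap : μ.map (fun ω => (T i ω, Z ω)) = (μ.map (T i)).prod (μ.map Z) :=
    (indepFun_iff_map_prod_eq_prod_map_map (hTmeas i).aemeasurable hZmeas.aemeasurable).mp hindep
  have hpair : Measurable fun ω => (T i ω, Z ω) := (hTmeas i).prodMk hZmeas
  rw [hev, ← Measure.map_apply hpair hSp, hmap, hTunif i, Measure.prod_apply_symm hSp]
  set μT := volume.restrict (Set.Icc (0 : ℝ) 1) with hμT
  set ν := μ.map Z with hν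
  -- slice description
  have hslice : ∀ z : Sc → ℝ, (fun t => (t, z)) ⁻¹' Sp
      = {t : ℝ | (∀ k : Sc, w k * z k ≤ w i * t + 2 * ε) ∧ ∃ k : Sc, w i * t ≤ w k * z k} := by
    intro z; rfl
  haveI hnei : Nonempty Sc := ⟨⟨k₁, hm1⟩⟩
  have hne : (Finset.univ : Finset Sc).Nonempty := Finset.univ_nonempty
  set c : (Sc → ℝ) → ℝ := fun z => Finset.univ.sup' hne fun k => w k * z k with hc
  set c2 : ℝ := w i + 2 * ε with hc2
  -- interval bound for slice, when w i > 0
  have hbound : ∀ z : Sc → ℝ, 0 < w i →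
      μT ((fun t => (t, z)) ⁻¹' Sp) ≤ ENNReal.ofReal (2 * ε / w i) := by
    intro z hwpos
    have hsub : (fun t => (t, z)) ⁻¹' Sp ⊆ Set.Icc ((c z - 2 * ε) / w i) (c z / w i) := by
      intro t ht
      rw [hslice] at ht
      obtain ⟨h1, k, h2⟩ := ht
      have hcle : c z ≤ w i * t + 2 * ε := Finset.sup'_le hne _ fun k' _ => h1 k'
      have hlec : w i * t ≤ c z := le_trans h2 (Finset.le_sup' (fun k : Sc => w k * z k) (Finset.mem_univ k))
      constructor
      · rw [div_le_iff₀ hwpos]; linarith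
      · rw [le_div_iff₀ hwpos]; linarith
    calc μT ((fun t => (t, z)) ⁻¹' Sp)
        ≤ μT (Set.Icc ((c z - 2 * ε) / w i) (c z / w i)) := measure_mono hsub
      _ ≤ volume (Set.Icc ((c z - 2 * ε) / w i) (c z / w i)) := by
          rw [hμT, Measure.restrict_apply' measurableSet_Icc]
          exact measure_mono Set.inter_subset_left
      _ = ENNReal.ofReal (2 * ε / w i) := by
          rw [Real.volume_Icc]; congr 1; field_simp; ring
  -- V and its measure
  set V : Set (Sc → ℝ) := {z | z ⟨k₁, hm1⟩ ≤ c2 ∧ z ⟨k₂, hm2⟩ ≤ c2} with hVdef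
  have hVmeas : MeasurableSet V :=
    (measurableSet_le (measurable_pi_apply _) measurable_const).inter
      (measurableSet_le (measurable_pi_apply _) measurable_const)
  have hVzero : ∀ z : Sc → ℝ, z ∉ V → μT ((fun t => (t, z)) ⁻¹' Sp) = 0 := by
    intro z hzV
    rw [hμT, Measure.restrict_apply' measurableSet_Icc]
    have hemp : ((fun t => (t, z)) ⁻¹' Sp) ∩ Set.Icc (0:ℝ) 1 = (∅ : Set ℝ) := by
      rw [Set.eq_empty_iff_forall_notMem]
      rintro t ⟨ht, ht01⟩
      rw [hslice] at ht
      obtain ⟨h1, -⟩ := ht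
      have hwt : w i * t ≤ w i := mul_le_of_le_one_right hw0 ht01.2
      simp only [hVdef, Set.mem_setOf_eq, not_and_or, not_le] at hzV
      rcases hzV with hz | hz
      · have := h1 ⟨k₁, hm1⟩; rw [hw1, one_mul] at this; rw [hc2] at hz; linarith
      · have := h1 ⟨k₂, hm2⟩; rw [hw2, one_mul] at this; rw [hc2] at hz; linarith
    rw [hemp]
    exact measure_empty
  have hc2pos : 0 ≤ c2 := by rw [hc2]; linarith
  have hVle : ν V ≤ ENNReal.ofReal (c2 ^ 2) := by
    have hpre : Z ⁻¹' V = (T k₁ ⁻¹' Set.Iic c2) ∩ (T k₂ ⁻¹' Set.Iic c2) := by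
      ext ω; simp [hVdef, hZ]
    have hone : ∀ k : Fin n, μ (T k ⁻¹' Set.Iic c2) ≤ ENNReal.ofReal c2 := by
      intro k
      rw [← Measure.map_apply (hTmeas k) measurableSet_Iic, hTunif k,
        Measure.restrict_apply' measurableSet_Icc]
      calc volume (Set.Iic c2 ∩ Set.Icc 0 1) ≤ volume (Set.Icc 0 c2) := by
            apply measure_mono
            rintro x ⟨hx1, hx2, -⟩
            exact ⟨hx2, hx1⟩
        _ = ENNReal.ofReal c2 := by rw [Real.volume_Icc, sub_zero]
    have hind : IndepFun (T k₁) (T k₂) μ := hTindep.indepFun h12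
    calc ν V = μ (Z ⁻¹' V) := Measure.map_apply hZmeas hVmeas
      _ = μ (T k₁ ⁻¹' Set.Iic c2) * μ (T k₂ ⁻¹' Set.Iic c2) := by
          rw [hpre]
          exact hind.measure_inter_preimage_eq_mul _ _ measurableSet_Iic measurableSet_Iic
      _ ≤ ENNReal.ofReal c2 * ENNReal.ofReal c2 := mul_le_mul' (hone k₁) (hone k₂)
      _ = ENNReal.ofReal (c2 ^ 2) := by rw [← ENNReal.ofReal_mul hc2pos, sq]
  rcases le_or_gt (2 * ε) (w i) with hcase | hcase
  · have hwpos : 0 < w i := lt_of_lt_of_le (by linarith) hcase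
    rcases le_or_gt (1 / 2 : ℝ) (w i) with hA | hB
    · -- Case A : w i ≥ 1/2
      calc ∫⁻ z, μT ((fun t => (t, z)) ⁻¹' Sp) ∂ν
          ≤ ∫⁻ _, ENNReal.ofReal (2 * ε / w i) ∂ν :=
            lintegral_mono fun z => hbound z hwpos
        _ = ENNReal.ofReal (2 * ε / w i) := by rw [lintegral_const, measure_univ, mul_one]
        _ ≤ ENNReal.ofReal (8 * ε) := by
            apply ENNReal.ofReal_le_ofReal
            rw [div_le_iff₀ hwpos]; nlinarith
    · -- Case B : 2ε ≤ w i < 1/2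
      have hpt : ∀ z, μT ((fun t => (t, z)) ⁻¹' Sp)
          ≤ V.indicator (fun _ => ENNReal.ofReal (2 * ε / w i)) z := by
        intro z
        by_cases hzV : z ∈ V
        · rw [Set.indicator_of_mem hzV]; exact hbound z hwpos
        · rw [Set.indicator_of_notMem hzV]; exact le_of_eq (hVzero z hzV)
      calc ∫⁻ z, μT ((fun t => (t, z)) ⁻¹' Sp) ∂ν
          ≤ ∫⁻ z, V.indicator (fun _ => ENNReal.ofReal (2 * ε / w i)) z ∂ν :=
            lintegral_mono hpt
        _ = ENNReal.ofReal (2 * ε / w i) * ν V := by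
            rw [lintegral_indicator hVmeas _, setLIntegral_const]
        _ ≤ ENNReal.ofReal (2 * ε / w i) * ENNReal.ofReal (c2 ^ 2) :=
            mul_le_mul_right hVle _
        _ ≤ ENNReal.ofReal (8 * ε) := by
            rw [← ENNReal.ofReal_mul (by positivity)]
            apply ENNReal.ofReal_le_ofReal
            rw [div_mul_eq_mul_div, div_le_iff₀ hwpos, hc2]
            have hA1 : (w i + 2 * ε) ^ 2 ≤ 4 * (w i) ^ 2 := by nlinarith
            nlinarith [mul_le_mul_of_nonneg_left hA1 (by linarith : (0:ℝ) ≤ 2 * ε),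
              mul_le_mul_of_nonneg_left hw1' (by positivity : (0:ℝ) ≤ 8 * ε * w i)]
  · -- Case C : w i < 2ε
    have hpt : ∀ z, μT ((fun t => (t, z)) ⁻¹' Sp)
        ≤ V.indicator (fun _ => (1 : ℝ≥0∞)) z := by
      intro z
      by_cases hzV : z ∈ V
      · rw [Set.indicator_of_mem hzV]
        calc μT ((fun t => (t, z)) ⁻¹' Sp) ≤ μT Set.univ := measure_mono (Set.subset_univ _)
          _ = 1 := by rw [hμT, Measure.restrict_apply_univ, Real.volume_Icc]; norm_num
      · rw [Set.indicator_of_notMem hzV]; exact le_of_eq (hVzero z hzV)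
    calc ∫⁻ z, μT ((fun t => (t, z)) ⁻¹' Sp) ∂ν
        ≤ ∫⁻ z, V.indicator (fun _ => (1 : ℝ≥0∞)) z ∂ν := lintegral_mono hpt
      _ = ν V := by rw [lintegral_indicator hVmeas _, setLIntegral_const, one_mul]
      _ ≤ ENNReal.ofReal (c2 ^ 2) := hVle
      _ ≤ ENNReal.ofReal (8 * ε) := by
          apply ENNReal.ofReal_le_ofReal
          rw [hc2]; nlinarith

theorem near_maximum_prob_bound {Ω : Type*} [MeasurableSpace Ω] (μ : Measure Ω)
    [IsProbabilityMeasure μ] (n f : ℕ) (hf : 1 ≤ f) (hn : 3 * f + 1 ≤ n)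
    (ε : ℝ) (hε : 0 < ε)
    (w : Fin n → ℝ) (hw : ∀ i, w i ∈ Set.Icc (0 : ℝ) 1)
    (S : Finset (Fin n)) (hS : n - f ≤ S.card) (hSone : ∀ i ∈ S, w i = 1)
    (T : Fin n → Ω → ℝ) (hTmeas : ∀ i, Measurable (T i))
    (hTindep : iIndepFun T μ)
    (hTunif : ∀ i, μ.map (T i) = volume.restrict (Set.Icc (0 : ℝ) 1)) :
    μ {ω | ∃ i j, i ≠ j ∧ (∀ k, w k * T k ω ≤ w j * T j ω) ∧
        w j * T j ω - 2 * ε ≤ w i * T i ω}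
      ≤ ENNReal.ofReal (8 * n * ε) := by
  classical
  have hn4 : (4 : ℝ) ≤ (n : ℝ) := by
    have : 4 ≤ n := by omega
    exact_mod_cast this
  rcases le_or_gt ε (1 / 2) with hε2 | hε2
  · -- main case
    have hA : ∀ i : Fin n, μ {ω | (∀ k, k ≠ i → w k * T k ω ≤ w i * T i ω + 2 * ε) ∧
        (∃ k, k ≠ i ∧ w i * T i ω ≤ w k * T k ω)} ≤ ENNReal.ofReal (8 * ε) := by
      intro i
      have hcard : 1 < (S.erase i).card := by
        have h1 : S.card - 1 ≤ (S.erase i).card := Finset.pred_card_le_card_erase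
        omega
      obtain ⟨k₁, hk₁, k₂, hk₂, h12⟩ := Finset.one_lt_card.mp hcard
      exact near_max_aux μ ε hε hε2 w hw T hTmeas hTindep hTunif i k₁ k₂
        (Finset.ne_of_mem_erase hk₁) (Finset.ne_of_mem_erase hk₂) h12
        (hSone _ (Finset.mem_of_mem_erase hk₁)) (hSone _ (Finset.mem_of_mem_erase hk₂))
    have hsub : {ω | ∃ i j, i ≠ j ∧ (∀ k, w k * T k ω ≤ w j * T j ω) ∧
          w j * T j ω - 2 * ε ≤ w i * T i ω}
        ⊆ ⋃ i : Fin n, {ω | (∀ k, k ≠ i → w k * T k ω ≤ w i * T i ω + 2 * ε) ∧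
          (∃ k, k ≠ i ∧ w i * T i ω ≤ w k * T k ω)} := by
      rintro ω ⟨i, j, hij, hmax, hnear⟩
      apply Set.mem_iUnion.mpr
      refine ⟨i, fun k _ => ?_, j, hij.symm, hmax i⟩
      have := hmax k
      linarith
    calc μ {ω | ∃ i j, i ≠ j ∧ (∀ k, w k * T k ω ≤ w j * T j ω) ∧
          w j * T j ω - 2 * ε ≤ w i * T i ω}
        ≤ μ (⋃ i : Fin n, {ω | (∀ k, k ≠ i → w k * T k ω ≤ w i * T i ω + 2 * ε) ∧
          (∃ k, k ≠ i ∧ w i * T i ω ≤ w k * T k ω)}) := measure_mono hsub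
      _ ≤ ∑' i : Fin n, μ {ω | (∀ k, k ≠ i → w k * T k ω ≤ w i * T i ω + 2 * ε) ∧
          (∃ k, k ≠ i ∧ w i * T i ω ≤ w k * T k ω)} := measure_iUnion_le _
      _ ≤ ∑' i : Fin n, ENNReal.ofReal (8 * ε) := ENNReal.tsum_le_tsum fun i => hA i
      _ = (n : ℝ≥0∞) * ENNReal.ofReal (8 * ε) := by
          rw [tsum_fintype]
          simp [Finset.sum_const, Finset.card_univ, nsmul_eq_mul]
      _ = ENNReal.ofReal (8 * n * ε) := by
          rw [← ENNReal.ofReal_natCast n, ← ENNReal.ofReal_mul (by positivity)]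
          congr 1; ring
  · -- trivial case : ε > 1/2
    refine le_trans prob_le_one ?_
    rw [← ENNReal.ofReal_one]
    apply ENNReal.ofReal_le_ofReal
    nlinarith
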